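/- Let G be a forest with distant edge {n-1,n}, where N_G(n-1) = {i_1,...,i_t, n-2, n} with each i_j a leaf. Let G_1, G_2, G_3 be the induced subgraphs on [n-1], [n-2], [n-3] respectively. Then I(G_1)^{[k]} ∩ x_n x_{n-1} I(G_2)^{[k-1]} = x_n x_{n-1}·( I(G_3)^{[k]} + x_{n-2} I(G_3)^{[k-1]} + Σ_{j=1}^t x_{i_j} I(G_2)^{[k-1]} ). -/

import Mathlib

open scoped Classical
open MvPolynomial RingTheory

noncomputable section

/-- `M` is a matching of `G`. -/
def IsMatchingSet {V : Type*} (G : SimpleGraph V) (M : Finset (Sym2 V)) : Prop :=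
  (∀ e ∈ M, e ∈ G.edgeSet) ∧
    ∀ e ∈ M, ∀ f ∈ M, e ≠ f → ∀ v : V, v ∈ e → v ∉ f

/-- The matching number `ν(G)`. -/
def matchingNumber {V : Type*} [Fintype V] (G : SimpleGraph V) : ℕ :=
  sSup {k | ∃ M : Finset (Sym2 V), IsMatchingSet G M ∧ M.card = k}

/-- The `k`-th squarefree power `I(G)^{[k]}` of the edge ideal of a graph `G` on `Fin n`:
the ideal generated by the monomials `x_{V(M)}` for all `k`-matchings `M` of `G`.
For `k = 0` this is the unit ideal. -/
def edgeIdealSqPow (K : Type*) [Field K] {n : ℕ} (G : SimpleGraph (Fin n)) (k : ℕ) :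
    Ideal (MvPolynomial (Fin n) K) :=
  Ideal.span {f | ∃ M : Finset (Sym2 (Fin n)), IsMatchingSet G M ∧ M.card = k ∧
    f = ∏ v ∈ Finset.univ.filter (fun v => ∃ e ∈ M, v ∈ e), X v}

/-- The graded maximal ideal `(x_1, …, x_n)` of the polynomial ring. -/
def maxIdeal (K : Type*) [Field K] (n : ℕ) : Ideal (MvPolynomial (Fin n) K) :=
  Ideal.span (Set.range X)

/-- The depth of `S/I` : the maximum length of an `S/I`-regular sequence contained in
the graded maximal ideal. -/
def depthQuot {K : Type*} [Field K] {n : ℕ} (I : Ideal (MvPolynomial (Fin n) K)) : ℕ :=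
  sSup {d | ∃ rs : List (MvPolynomial (Fin n) K), rs.length = d ∧
    (∀ r ∈ rs, r ∈ maxIdeal K n) ∧
    RingTheory.Sequence.IsRegular (MvPolynomial (Fin n) K ⧸ I) rs}

/-- The normalized depth function of the edge ideal of `G`:
`g_{I(G)}(k) = depth(S/I(G)^{[k]}) - (2k-1)`. -/
def gEdge (K : Type*) [Field K] {n : ℕ} (G : SimpleGraph (Fin n)) (k : ℕ) : ℤ :=
  (depthQuot (edgeIdealSqPow K G k) : ℤ) - (2 * k - 1)


/-- The graph obtained from `G` by deleting the vertices in `s` (keeping the same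
vertex type; deleted vertices become isolated). -/
def delV {V : Type*} (G : SimpleGraph V) (s : Set V) : SimpleGraph V where
  Adj u v := G.Adj u v ∧ u ∉ s ∧ v ∉ s
  symm := ⟨fun u v h => ⟨h.1.symm, h.2.2, h.2.1⟩⟩
  loopless := ⟨fun v h => G.irrefl h.1⟩


namespace SqAux

variable {n : ℕ}

/-- vertex-indicator vector of a matching -/
def mvec (M : Finset (Sym2 (Fin n))) : Fin n →₀ ℕ :=
  ∑ v ∈ Finset.univ.filter (fun v => ∃ e ∈ M, v ∈ e), Finsupp.single v 1

lemma mvec_apply (M : Finset (Sym2 (Fin n))) (u : Fin n) :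
    mvec M u = if (∃ e ∈ M, u ∈ e) then 1 else 0 := by
  classical
  rw [mvec, Finsupp.finset_sum_apply]
  by_cases h : ∃ e ∈ M, u ∈ e
  · rw [if_pos h, Finset.sum_eq_single u]
    · simp
    · intro b _ hb; simp [Finsupp.single_apply, hb]
    · intro hu; exact absurd (Finset.mem_filter.mpr ⟨Finset.mem_univ u, h⟩) hu
  · rw [if_neg h]
    apply Finset.sum_eq_zero
    intro v hv
    have hvu : v ≠ u := by
      rintro rfl
      exact h (Finset.mem_filter.mp hv).2
    simp [Finsupp.single_apply, hvu]

lemma mvec_mono {M M' : Finset (Sym2 (Fin n))} (h : M' ⊆ M) : mvec M' ≤ mvec M := by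
  rw [Finsupp.le_def]
  intro u
  rw [mvec_apply, mvec_apply]
  split_ifs with h1 h2
  · exact le_refl _
  · obtain ⟨e, he, hu⟩ := h1; exact absurd ⟨e, h he, hu⟩ h2
  · exact Nat.zero_le _
  · exact le_refl _

lemma add_le_of_disj {a b m : Fin n →₀ ℕ} (ha : a ≤ m) (hb : b ≤ m)
    (h : ∀ u, a u = 0 ∨ b u = 0) : a + b ≤ m := by
  rw [Finsupp.le_def] at *
  intro u
  have h1 := ha u; have h2 := hb u
  rcases h u with h0 | h0 <;> simp [Finsupp.add_apply, h0] <;> omega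

lemma mvec_insert {M : Finset (Sym2 (Fin n))} {x y : Fin n} (hxy : x ≠ y)
    (hx : ¬ ∃ e ∈ M, x ∈ e) (hy : ¬ ∃ e ∈ M, y ∈ e) :
    mvec (insert s(x, y) M) = Finsupp.single x 1 + Finsupp.single y 1 + mvec M := by
  ext u
  have key : (∃ e ∈ insert s(x, y) M, u ∈ e) ↔ (u = x ∨ u = y ∨ ∃ e ∈ M, u ∈ e) := by
    constructor
    · rintro ⟨e, he, hue⟩
      rcases Finset.mem_insert.mp he with rfl | he'
      · rcases Sym2.mem_iff.mp hue with rfl | rfl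
        · exact Or.inl rfl
        · exact Or.inr (Or.inl rfl)
      · exact Or.inr (Or.inr ⟨e, he', hue⟩)
    · rintro (rfl | rfl | ⟨e, he, hue⟩)
      · exact ⟨s(u, y), Finset.mem_insert_self _ _, by simp⟩
      · exact ⟨s(x, u), Finset.mem_insert_self _ _, by simp⟩
      · exact ⟨e, Finset.mem_insert_of_mem he, hue⟩
  simp only [Finsupp.add_apply, mvec_apply, Finsupp.single_apply, key]
  by_cases hux : u = x
  · subst hux
    simp [hx, Ne.symm hxy]
  · by_cases huy : u = y
    · subst huy
      simp [hy, hxy]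
    · simp [hux, huy, Ne.symm hux, Ne.symm huy]

lemma mvec_erase {G : SimpleGraph (Fin n)} {M : Finset (Sym2 (Fin n))}
    (hM : IsMatchingSet G M) {x y : Fin n} (hxy : x ≠ y) (he : s(x, y) ∈ M) :
    mvec M = Finsupp.single x 1 + Finsupp.single y 1 + mvec (M.erase s(x, y)) := by
  have hins : insert s(x, y) (M.erase s(x, y)) = M := Finset.insert_erase he
  have hx : ¬ ∃ e ∈ M.erase s(x, y), x ∈ e := by
    rintro ⟨e, he', hxe⟩
    obtain ⟨hne, heM⟩ := Finset.mem_erase.mp he'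
    exact hM.2 s(x, y) he e heM (fun h => hne h.symm) x (by simp) hxe
  have hy : ¬ ∃ e ∈ M.erase s(x, y), y ∈ e := by
    rintro ⟨e, he', hye⟩
    obtain ⟨hne, heM⟩ := Finset.mem_erase.mp he'
    exact hM.2 s(x, y) he e heM (fun h => hne h.symm) y (by simp) hye
  conv_lhs => rw [← hins]
  exact mvec_insert hxy hx hy

lemma matching_subset {V : Type*} {G : SimpleGraph V} {M M' : Finset (Sym2 V)}
    (hs : M' ⊆ M) (h : IsMatchingSet G M) : IsMatchingSet G M' :=
  ⟨fun e he => h.1 e (hs he), fun e he f hf => h.2 e (hs he) f (hs hf)⟩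

lemma delV_edge {V : Type*} {G : SimpleGraph V} {s : Set V} {a b : V} :
    s(a, b) ∈ (delV G s).edgeSet ↔ G.Adj a b ∧ a ∉ s ∧ b ∉ s := by
  rw [SimpleGraph.mem_edgeSet]; rfl

lemma delV_edge_mono {V : Type*} {G : SimpleGraph V} {s s' : Set V} (hss : s ⊆ s')
    {e : Sym2 V} (he : e ∈ (delV G s').edgeSet) : e ∈ (delV G s).edgeSet := by
  induction e using Sym2.ind with
  | _ a b =>
    rw [delV_edge] at he ⊢
    exact ⟨he.1, fun h => he.2.1 (hss h), fun h => he.2.2 (hss h)⟩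

lemma matching_delV_mono {V : Type*} {G : SimpleGraph V} {s s' : Set V} (hss : s ⊆ s')
    {M : Finset (Sym2 V)} (h : IsMatchingSet (delV G s') M) :
    IsMatchingSet (delV G s) M :=
  ⟨fun e he => delV_edge_mono hss (h.1 e he), h.2⟩

lemma not_mem_of_delV_edge {V : Type*} {G : SimpleGraph V} {s : Set V} {e : Sym2 V}
    (he : e ∈ (delV G s).edgeSet) {v : V} (hv : v ∈ s) : v ∉ e := by
  induction e using Sym2.ind with
  | _ a b =>
    rw [delV_edge] at he
    intro hmem
    rcases Sym2.mem_iff.mp hmem with rfl | rfl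
    · exact he.2.1 hv
    · exact he.2.2 hv

/-- the indicator vector of a matching vanishes on deleted vertices -/
lemma mvec_delV_eq_zero {G : SimpleGraph (Fin n)} {s : Set (Fin n)}
    {M : Finset (Sym2 (Fin n))} (h : IsMatchingSet (delV G s) M) {v : Fin n} (hv : v ∈ s) :
    mvec M v = 0 := by
  rw [mvec_apply, if_neg]
  rintro ⟨e, he, hve⟩
  exact not_mem_of_delV_edge (h.1 e he) hv hve

lemma prod_X_eq (K : Type*) [Field K] (s : Finset (Fin n)) :
    (∏ v ∈ s, X v : MvPolynomial (Fin n) K) =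
      monomial (∑ v ∈ s, Finsupp.single v 1) 1 := by
  classical
  induction s using Finset.induction with
  | empty => simp
  | insert x s hx ih =>
    rw [Finset.prod_insert hx, Finset.sum_insert hx, ih, X, monomial_mul, one_mul]


lemma mvec_apply_eq_zero {M : Finset (Sym2 (Fin n))} {v : Fin n}
    (h : ∀ e ∈ M, v ∉ e) : mvec M v = 0 := by
  rw [mvec_apply, if_neg]
  rintro ⟨e, he, hv⟩
  exact h e he hv

lemma single_add_le_of_apply_zero {v : Fin n} {x m : Fin n →₀ ℕ} (hx : x v = 0)
    (h1 : Finsupp.single v 1 ≤ m) (h2 : x ≤ m) : Finsupp.single v 1 + x ≤ m := by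
  apply add_le_of_disj h1 h2
  intro u
  by_cases h : u = v
  · subst h; exact Or.inr hx
  · exact Or.inl (by simp [Finsupp.single_apply, Ne.symm h])

lemma not_mem_of_mem_erase {V : Type*} [DecidableEq V] {G : SimpleGraph V} {M : Finset (Sym2 V)}
    (hM : IsMatchingSet G M) {e : Sym2 V} (he : e ∈ M) {v : V} (hv : v ∈ e)
    {f : Sym2 V} (hf : f ∈ M.erase e) : v ∉ f := by
  obtain ⟨hne, hfM⟩ := Finset.mem_erase.mp hf
  exact hM.2 e he f hfM (fun h => hne h.symm) v hv

lemma mem_delV_edgeSet_iff {V : Type*} {G : SimpleGraph V} {s : Set V} {e : Sym2 V} :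
    e ∈ (delV G s).edgeSet ↔ e ∈ G.edgeSet ∧ ∀ v ∈ s, v ∉ e := by
  induction e using Sym2.ind with
  | _ a b =>
    rw [delV_edge, SimpleGraph.mem_edgeSet]
    constructor
    · rintro ⟨h, ha, hb⟩
      refine ⟨h, fun v hv hve => ?_⟩
      rcases Sym2.mem_iff.mp hve with rfl | rfl
      · exact ha hv
      · exact hb hv
    · rintro ⟨h, hall⟩
      exact ⟨h, fun hv => hall a hv (by simp), fun hv => hall b hv (by simp)⟩

lemma matching_insert {V : Type*} [DecidableEq V] {G : SimpleGraph V} {M : Finset (Sym2 V)}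
    (hM : IsMatchingSet G M) {e : Sym2 V} (he : e ∈ G.edgeSet)
    (hdisj : ∀ f ∈ M, ∀ v, v ∈ e → v ∉ f) :
    IsMatchingSet G (insert e M) := by
  constructor
  · intro f hf
    rcases Finset.mem_insert.mp hf with rfl | hf'
    · exact he
    · exact hM.1 f hf'
  · intro f hf g hg hfg v hvf
    rcases Finset.mem_insert.mp hf with rfl | hf' <;> rcases Finset.mem_insert.mp hg with rfl | hg'
    · exact absurd rfl hfg
    · exact hdisj g hg' v hvf
    · intro hvg; exact hdisj f hf' v hvg hvf
    · exact hM.2 f hf' g hg' hfg v hvf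

/-- the set of exponent vectors of `k`-matchings -/
def MS (G : SimpleGraph (Fin n)) (k : ℕ) : Set (Fin n →₀ ℕ) :=
  {s | ∃ M, IsMatchingSet G M ∧ M.card = k ∧ s = mvec M}

lemma core (G : SimpleGraph (Fin n)) [DecidableRel G.Adj]
    (vn vw vu : Fin n)
    (hnm : vn ≠ vw) (hnu' : vn ≠ vu) (hwu : vw ≠ vu)
    (T : Finset (Fin n)) (hT : ∀ i ∈ T, G.degree i = 1)
    (hvnT : vn ∉ T)
    (hnbr : G.neighborFinset vw = insert vu (insert vn T))
    (k : ℕ) (h1 : 1 ≤ k)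
    (m : Fin n →₀ ℕ) :
    ((∃ a ∈ MS (delV G {vn}) k, a ≤ m) ∧
      (∃ b ∈ Set.image2 (· + ·)
          {Finsupp.single vn 1 + Finsupp.single vw 1} (MS (delV G {vn, vw}) (k-1)), b ≤ m)) ↔
    (∃ c ∈ Set.image2 (· + ·) {Finsupp.single vn 1 + Finsupp.single vw 1}
        (MS (delV G {vn, vw, vu}) k ∪
         Set.image2 (· + ·) {Finsupp.single vu 1} (MS (delV G {vn, vw, vu}) (k-1)) ∪
         Set.image2 (· + ·) ((fun i => Finsupp.single i 1) '' (T : Set (Fin n)))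
           (MS (delV G {vn, vw}) (k-1))), c ≤ m) := by
  classical
  set w₀ := Finsupp.single vn 1 + Finsupp.single vw 1 with hw₀
  have hsub12 : ({vn} : Set (Fin n)) ⊆ {vn, vw} := fun x hx => Or.inl hx
  have hsub13 : ({vn} : Set (Fin n)) ⊆ {vn, vw, vu} := fun x hx => Or.inl hx
  have hsub23 : ({vn, vw} : Set (Fin n)) ⊆ {vn, vw, vu} :=
    fun x hx => hx.elim Or.inl (fun h => Or.inr (Or.inl h))
  constructor
  · rintro ⟨⟨a, ⟨M₁, hM₁, hc₁, rfl⟩, ham⟩, ⟨b, hb, hbm⟩⟩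
    obtain ⟨w, hwmem, d, hd, rfl⟩ := hb
    rw [Set.mem_singleton_iff] at hwmem
    subst hwmem
    have hw0m : w₀ ≤ m := le_trans le_self_add hbm
    have hvnm : Finsupp.single vn 1 ≤ m := le_trans le_self_add hw0m
    have hvwm : Finsupp.single vw 1 ≤ m := le_trans le_add_self hw0m
    have hM₁n : ∀ e ∈ M₁, vn ∉ e :=
      fun e he => not_mem_of_delV_edge (hM₁.1 e he) rfl
    have hmv1n : mvec M₁ vn = 0 := mvec_apply_eq_zero hM₁n
    by_cases hw : ∃ e ∈ M₁, vw ∈ e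
    · -- vw is matched in M₁
      obtain ⟨e, he, hwe⟩ := hw
      obtain ⟨y, rfl⟩ := Sym2.mem_iff_exists.mp hwe
      have heG1 := hM₁.1 _ he
      have hadj' : G.Adj vw y := (delV_edge.mp heG1).1
      have hyn : y ≠ vn := fun h => (delV_edge.mp heG1).2.2 h
      have hwy : vw ≠ y := G.ne_of_adj hadj'
      have hyT : y = vu ∨ y ∈ T := by
        have hy : y ∈ G.neighborFinset vw := by
          rw [SimpleGraph.mem_neighborFinset]; exact hadj'
        rw [hnbr] at hy
        rcases Finset.mem_insert.mp hy with h | h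
        · exact Or.inl h
        · rcases Finset.mem_insert.mp h with h | h
          · exact absurd h hyn
          · exact Or.inr h
      have hdec : mvec M₁ = Finsupp.single vw 1 + Finsupp.single y 1
          + mvec (M₁.erase s(vw, y)) := mvec_erase hM₁ hwy he
      have hM'sub : M₁.erase s(vw, y) ⊆ M₁ := Finset.erase_subset _ _
      have hM'card : (M₁.erase s(vw, y)).card = k - 1 := by
        rw [Finset.card_erase_of_mem he, hc₁]
      have hM'w : ∀ f ∈ M₁.erase s(vw, y), vw ∉ f :=
        fun f hf => not_mem_of_mem_erase hM₁ he (by simp) hf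
      have hM'y : ∀ f ∈ M₁.erase s(vw, y), y ∉ f :=
        fun f hf => not_mem_of_mem_erase hM₁ he (by simp) hf
      have hM'n : ∀ f ∈ M₁.erase s(vw, y), vn ∉ f :=
        fun f hf => hM₁n f (hM'sub hf)
      have hM'match2 : IsMatchingSet (delV G {vn, vw}) (M₁.erase s(vw, y)) := by
        refine ⟨fun f hf => ?_, fun e' he' f hf => hM₁.2 e' (hM'sub he') f (hM'sub hf)⟩
        rw [mem_delV_edgeSet_iff]
        refine ⟨(mem_delV_edgeSet_iff.mp (hM₁.1 f (hM'sub hf))).1, fun v hv => ?_⟩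
        simp only [Set.mem_insert_iff, Set.mem_singleton_iff] at hv
        rcases hv with rfl | rfl
        · exact hM'n f hf
        · exact hM'w f hf
      have hle1 : mvec (M₁.erase s(vw, y)) ≤ m := le_trans (mvec_mono hM'sub) ham
      rcases hyT with hyu | hyT
      · -- y = vu : middle generator
        obtain rfl := hyu.symm
        have hM'match3 : IsMatchingSet (delV G {vn, vw, vu}) (M₁.erase s(vw, vu)) := by
          refine ⟨fun f hf => ?_, fun e' he' f hf => hM₁.2 e' (hM'sub he') f (hM'sub hf)⟩
          rw [mem_delV_edgeSet_iff]
          refine ⟨(mem_delV_edgeSet_iff.mp (hM₁.1 f (hM'sub hf))).1, fun v hv => ?_⟩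
          simp only [Set.mem_insert_iff, Set.mem_singleton_iff] at hv
          rcases hv with rfl | rfl | rfl
          · exact hM'n f hf
          · exact hM'w f hf
          · exact hM'y f hf
        refine ⟨w₀ + (Finsupp.single vu 1 + mvec (M₁.erase s(vw, vu))), ?_, ?_⟩
        · exact Set.mem_image2_of_mem rfl (Or.inl (Or.inr
            (Set.mem_image2_of_mem rfl ⟨_, hM'match3, hM'card, rfl⟩)))
        · have heq : w₀ + (Finsupp.single vu 1 + mvec (M₁.erase s(vw, vu)))
              = Finsupp.single vn 1 + mvec M₁ := by
            rw [hdec, hw₀]; abel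
          rw [heq]
          exact single_add_le_of_apply_zero hmv1n hvnm ham
      · -- y ∈ T : third generator
        refine ⟨w₀ + (Finsupp.single y 1 + mvec (M₁.erase s(vw, y))), ?_, ?_⟩
        · exact Set.mem_image2_of_mem rfl (Or.inr
            (Set.mem_image2_of_mem ⟨y, hyT, rfl⟩ ⟨_, hM'match2, hM'card, rfl⟩))
        · have heq : w₀ + (Finsupp.single y 1 + mvec (M₁.erase s(vw, y)))
              = Finsupp.single vn 1 + mvec M₁ := by
            rw [hdec, hw₀]; abel
          rw [heq]
          exact single_add_le_of_apply_zero hmv1n hvnm ham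
    · -- vw unmatched in M₁
      have hmv1w : mvec M₁ vw = 0 := by
        rw [mvec_apply, if_neg hw]
      by_cases hu : ∃ e ∈ M₁, vu ∈ e
      · -- vu matched : middle generator
        obtain ⟨e, he, hue⟩ := hu
        obtain ⟨z, rfl⟩ := Sym2.mem_iff_exists.mp hue
        have heG1 := hM₁.1 _ he
        have huz : vu ≠ z := G.ne_of_adj (delV_edge.mp heG1).1
        have hdec : mvec M₁ = Finsupp.single vu 1 + Finsupp.single z 1
            + mvec (M₁.erase s(vu, z)) := mvec_erase hM₁ huz he
        have hM'sub : M₁.erase s(vu, z) ⊆ M₁ := Finset.erase_subset _ _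
        have hM'card : (M₁.erase s(vu, z)).card = k - 1 := by
          rw [Finset.card_erase_of_mem he, hc₁]
        have hM'match3 : IsMatchingSet (delV G {vn, vw, vu}) (M₁.erase s(vu, z)) := by
          refine ⟨fun f hf => ?_, fun e' he' f hf => hM₁.2 e' (hM'sub he') f (hM'sub hf)⟩
          rw [mem_delV_edgeSet_iff]
          refine ⟨(mem_delV_edgeSet_iff.mp (hM₁.1 f (hM'sub hf))).1, fun v hv => ?_⟩
          simp only [Set.mem_insert_iff, Set.mem_singleton_iff] at hv
          rcases hv with rfl | rfl | rfl
          · exact hM₁n f (hM'sub hf)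
          · exact fun hvf => hw ⟨f, hM'sub hf, hvf⟩
          · exact not_mem_of_mem_erase hM₁ he (by simp) hf
        refine ⟨w₀ + (Finsupp.single vu 1 + mvec (M₁.erase s(vu, z))), ?_, ?_⟩
        · exact Set.mem_image2_of_mem rfl (Or.inl (Or.inr
            (Set.mem_image2_of_mem rfl ⟨_, hM'match3, hM'card, rfl⟩)))
        · have hqle : Finsupp.single vu 1 + mvec (M₁.erase s(vu, z)) ≤ mvec M₁ := by
            rw [hdec]
            have harr : ((Finsupp.single vu 1 + Finsupp.single z 1)
                + mvec (M₁.erase s(vu, z)) : Fin n →₀ ℕ)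
                = (Finsupp.single vu 1 + mvec (M₁.erase s(vu, z))) + Finsupp.single z 1 := by
              abel
            rw [harr]
            exact le_self_add
          have hqw : ((Finsupp.single vu 1 + mvec (M₁.erase s(vu, z)) : Fin n →₀ ℕ)) vw = 0 := by
            have h2 : mvec (M₁.erase s(vu, z)) vw = 0 :=
              mvec_apply_eq_zero (fun f hf hvf => hw ⟨f, hM'sub hf, hvf⟩)
            simp [Finsupp.add_apply, Finsupp.single_apply, Ne.symm hwu, h2]
          have hqn : ((Finsupp.single vw 1
              + (Finsupp.single vu 1 + mvec (M₁.erase s(vu, z))) : Fin n →₀ ℕ)) vn = 0 := by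
            have h2 : mvec (M₁.erase s(vu, z)) vn = 0 :=
              mvec_apply_eq_zero (fun f hf => hM₁n f (hM'sub hf))
            simp [Finsupp.add_apply, Finsupp.single_apply, hnm, hnu',
              Ne.symm hnm, Ne.symm hnu', h2]
          have : w₀ + (Finsupp.single vu 1 + mvec (M₁.erase s(vu, z)))
              = Finsupp.single vn 1 + (Finsupp.single vw 1
                + (Finsupp.single vu 1 + mvec (M₁.erase s(vu, z)))) := by
            rw [hw₀]; abel
          rw [this]
          exact single_add_le_of_apply_zero hqn hvnm
            (single_add_le_of_apply_zero hqw hvwm (le_trans hqle ham))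
      · -- neither : first generator, M₁ is a matching of G₃
        have hM₁match3 : IsMatchingSet (delV G {vn, vw, vu}) M₁ := by
          refine ⟨fun f hf => ?_, hM₁.2⟩
          rw [mem_delV_edgeSet_iff]
          refine ⟨(mem_delV_edgeSet_iff.mp (hM₁.1 f hf)).1, fun v hv => ?_⟩
          simp only [Set.mem_insert_iff, Set.mem_singleton_iff] at hv
          rcases hv with rfl | rfl | rfl
          · exact hM₁n f hf
          · exact fun hvf => hw ⟨f, hf, hvf⟩
          · exact fun hvf => hu ⟨f, hf, hvf⟩
        refine ⟨w₀ + mvec M₁, ?_, ?_⟩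
        · exact Set.mem_image2_of_mem rfl (Or.inl (Or.inl ⟨M₁, hM₁match3, hc₁, rfl⟩))
        · have hqn : ((Finsupp.single vw 1 + mvec M₁ : Fin n →₀ ℕ)) vn = 0 := by
            simp [Finsupp.add_apply, Finsupp.single_apply, Ne.symm hnm, hnm, hmv1n]
          have : w₀ + mvec M₁
              = Finsupp.single vn 1 + (Finsupp.single vw 1 + mvec M₁) := by
            rw [hw₀]; abel
          rw [this]
          exact single_add_le_of_apply_zero hqn hvnm
            (single_add_le_of_apply_zero hmv1w hvwm ham)
  · rintro ⟨c, hc, hcm⟩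
    obtain ⟨w, hwmem, d, hd, rfl⟩ := hc
    rw [Set.mem_singleton_iff] at hwmem
    subst hwmem
    rcases hd with (hd | hd) | hd
    · -- first generator
      obtain ⟨M₃, hM₃, hc₃, rfl⟩ := hd
      have hM₃1 : IsMatchingSet (delV G {vn}) M₃ := matching_delV_mono hsub13 hM₃
      have hne : M₃.Nonempty := Finset.card_pos.mp (by omega)
      obtain ⟨e, he⟩ := hne
      have hM₂match : IsMatchingSet (delV G {vn, vw}) (M₃.erase e) :=
        matching_delV_mono hsub23 (matching_subset (Finset.erase_subset _ _) hM₃)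
      refine ⟨⟨mvec M₃, ⟨M₃, hM₃1, hc₃, rfl⟩, le_trans le_add_self hcm⟩,
        ⟨w₀ + mvec (M₃.erase e), Set.mem_image2_of_mem rfl
          ⟨M₃.erase e, hM₂match, by rw [Finset.card_erase_of_mem he, hc₃], rfl⟩, ?_⟩⟩
      exact le_trans (add_le_add le_rfl (mvec_mono (Finset.erase_subset _ _))) hcm
    · -- middle generator
      obtain ⟨u, humem, d', hd', rfl⟩ := hd
      rw [Set.mem_singleton_iff] at humem
      subst humem
      obtain ⟨M₃', hM₃', hc₃', rfl⟩ := hd'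
      have hA : ∀ f ∈ M₃', vn ∉ f :=
        fun f hf => not_mem_of_delV_edge (hM₃'.1 f hf) (Or.inl rfl)
      have hB : ∀ f ∈ M₃', vw ∉ f :=
        fun f hf => not_mem_of_delV_edge (hM₃'.1 f hf) (Or.inr (Or.inl rfl))
      have hC : ∀ f ∈ M₃', vu ∉ f :=
        fun f hf => not_mem_of_delV_edge (hM₃'.1 f hf) (Or.inr (Or.inr rfl))
      have hadjwu : G.Adj vw vu := by
        have h := Finset.mem_insert_self vu (insert vn T)
        rw [← hnbr, SimpleGraph.mem_neighborFinset] at h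
        exact h
      have hedge : s(vw, vu) ∈ (delV G {vn}).edgeSet :=
        delV_edge.mpr ⟨hadjwu, fun h => hnm h.symm, fun h => hnu' h.symm⟩
      have hM₁match : IsMatchingSet (delV G {vn}) (insert s(vw, vu) M₃') := by
        refine matching_insert (matching_delV_mono hsub13 hM₃') hedge ?_
        intro f hf v hv
        rcases Sym2.mem_iff.mp hv with rfl | rfl
        · exact hB f hf
        · exact hC f hf
      have hnotmem : s(vw, vu) ∉ M₃' := fun h => hB _ h (by simp)
      have hcard : (insert s(vw, vu) M₃').card = k := by
        rw [Finset.card_insert_of_notMem hnotmem, hc₃']; omega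
      have hmins : mvec (insert s(vw, vu) M₃')
          = Finsupp.single vw 1 + Finsupp.single vu 1 + mvec M₃' :=
        mvec_insert hwu (fun ⟨f, hf, h⟩ => hB f hf h) (fun ⟨f, hf, h⟩ => hC f hf h)
      have hkey : w₀ + (Finsupp.single vu 1 + mvec M₃')
          = Finsupp.single vn 1 + mvec (insert s(vw, vu) M₃') := by
        rw [hmins, hw₀]; abel
      have hcm' : w₀ + (Finsupp.single vu 1 + mvec M₃') ≤ m := hcm
      refine ⟨⟨mvec (insert s(vw, vu) M₃'), ⟨_, hM₁match, hcard, rfl⟩,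
        le_trans le_add_self (hkey ▸ hcm')⟩,
        ⟨w₀ + mvec M₃', Set.mem_image2_of_mem rfl
          ⟨M₃', matching_delV_mono hsub23 hM₃', hc₃', rfl⟩, ?_⟩⟩
      exact le_trans (add_le_add le_rfl le_add_self) hcm
    · -- third generator
      obtain ⟨u, humem, d', hd', rfl⟩ := hd
      obtain ⟨i, hiT, rfl⟩ := humem
      have hiT' : i ∈ T := hiT
      obtain ⟨M₂', hM₂', hc₂', rfl⟩ := hd'
      have hA : ∀ f ∈ M₂', vn ∉ f :=
        fun f hf => not_mem_of_delV_edge (hM₂'.1 f hf) (Or.inl rfl)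
      have hB : ∀ f ∈ M₂', vw ∉ f :=
        fun f hf => not_mem_of_delV_edge (hM₂'.1 f hf) (Or.inr rfl)
      have hadjwi : G.Adj vw i := by
        have h : i ∈ insert vu (insert vn T) :=
          Finset.mem_insert_of_mem (Finset.mem_insert_of_mem hiT')
        rw [← hnbr, SimpleGraph.mem_neighborFinset] at h
        exact h
      have hwi : vw ≠ i := G.ne_of_adj hadjwi
      have hin : i ≠ vn := fun h => hvnT (h ▸ hiT')
      have hnfi : G.neighborFinset i = {vw} := by
        obtain ⟨a, ha⟩ := Finset.card_eq_one.mp (hT i hiT')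
        have hvwmem : vw ∈ G.neighborFinset i := by
          rw [SimpleGraph.mem_neighborFinset]; exact hadjwi.symm
        rw [ha] at hvwmem
        obtain rfl := Finset.mem_singleton.mp hvwmem
        exact ha
      have hCi : ∀ f ∈ M₂', i ∉ f := by
        intro f hf hif
        obtain ⟨z, rfl⟩ := Sym2.mem_iff_exists.mp hif
        have hadjiz : G.Adj i z := (delV_edge.mp (hM₂'.1 _ hf)).1
        have hz : z ∈ G.neighborFinset i := by
          rw [SimpleGraph.mem_neighborFinset]; exact hadjiz
        rw [hnfi] at hz
        obtain rfl := Finset.mem_singleton.mp hz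
        exact hB _ hf (by simp)
      have hedge : s(vw, i) ∈ (delV G {vn}).edgeSet :=
        delV_edge.mpr ⟨hadjwi, fun h => hnm h.symm, fun h => hin h⟩
      have hM₁match : IsMatchingSet (delV G {vn}) (insert s(vw, i) M₂') := by
        refine matching_insert (matching_delV_mono hsub12 hM₂') hedge ?_
        intro f hf v hv
        rcases Sym2.mem_iff.mp hv with rfl | rfl
        · exact hB f hf
        · exact hCi f hf
      have hnotmem : s(vw, i) ∉ M₂' := fun h => hB _ h (by simp)
      have hcard : (insert s(vw, i) M₂').card = k := by
        rw [Finset.card_insert_of_notMem hnotmem, hc₂']; omega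
      have hmins : mvec (insert s(vw, i) M₂')
          = Finsupp.single vw 1 + Finsupp.single i 1 + mvec M₂' :=
        mvec_insert hwi (fun ⟨f, hf, h⟩ => hB f hf h) (fun ⟨f, hf, h⟩ => hCi f hf h)
      have hkey : w₀ + (Finsupp.single i 1 + mvec M₂')
          = Finsupp.single vn 1 + mvec (insert s(vw, i) M₂') := by
        rw [hmins, hw₀]; abel
      have hcm' : w₀ + (Finsupp.single i 1 + mvec M₂') ≤ m := hcm
      refine ⟨⟨mvec (insert s(vw, i) M₂'), ⟨_, hM₁match, hcard, rfl⟩,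
        le_trans le_add_self (hkey ▸ hcm')⟩,
        ⟨w₀ + mvec M₂', Set.mem_image2_of_mem rfl ⟨M₂', hM₂', hc₂', rfl⟩, ?_⟩⟩
      exact le_trans (add_le_add le_rfl le_add_self) hcm


lemma span_set_eq (K : Type*) [Field K] (G : SimpleGraph (Fin n)) (k : ℕ) :
    {f : MvPolynomial (Fin n) K | ∃ M : Finset (Sym2 (Fin n)), IsMatchingSet G M ∧ M.card = k ∧
      f = ∏ v ∈ Finset.univ.filter (fun v => ∃ e ∈ M, v ∈ e), X v}
      = (fun s => monomial s (1 : K)) '' MS G k := by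
  ext f
  constructor
  · rintro ⟨M, hM, hc, rfl⟩
    exact ⟨mvec M, ⟨M, hM, hc, rfl⟩, (prod_X_eq K _).symm⟩
  · rintro ⟨s, ⟨M, hM, hc, rfl⟩, rfl⟩
    exact ⟨M, hM, hc, (prod_X_eq K _).symm⟩

lemma span_mono_mul (K : Type*) [Field K] (A B : Set (Fin n →₀ ℕ)) :
    Ideal.span ((fun s => monomial s (1 : K)) '' A) *
        Ideal.span ((fun s => monomial s (1 : K)) '' B) =
      Ideal.span ((fun s => monomial s (1 : K)) '' Set.image2 (· + ·) A B) := by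
  rw [Ideal.span_mul_span']
  congr 1
  ext f
  simp only [Set.mem_mul, Set.mem_image, Set.mem_image2]
  constructor
  · rintro ⟨x, ⟨a, ha, rfl⟩, y, ⟨b, hb, rfl⟩, rfl⟩
    exact ⟨a + b, ⟨a, ha, b, hb, rfl⟩, by rw [monomial_mul, one_mul]⟩
  · rintro ⟨c, ⟨a, ha, b, hb, rfl⟩, rfl⟩
    exact ⟨monomial a 1, ⟨a, ha, rfl⟩, monomial b 1, ⟨b, hb, rfl⟩, by rw [monomial_mul, one_mul]⟩

lemma singleton_XX (K : Type*) [Field K] (a b : Fin n) :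
    ({(X a * X b : MvPolynomial (Fin n) K)} : Set _)
      = (fun s => monomial s (1 : K)) '' {Finsupp.single a 1 + Finsupp.single b 1} := by
  rw [Set.image_singleton, X, X, monomial_mul, one_mul]

lemma singleton_X (K : Type*) [Field K] (a : Fin n) :
    ({(X a : MvPolynomial (Fin n) K)} : Set _)
      = (fun s => monomial s (1 : K)) '' {Finsupp.single a 1} := by
  rw [Set.image_singleton, X]

lemma image_X (K : Type*) [Field K] (T : Set (Fin n)) :
    ((fun i : Fin n => (X i : MvPolynomial (Fin n) K)) '' T)
      = (fun s => monomial s (1 : K)) '' ((fun i => Finsupp.single i 1) '' T) := by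
  rw [Set.image_image]
  rfl

end SqAux

lemma edgeIdealSqPow_eq' (K : Type*) [Field K] {n : ℕ} (G : SimpleGraph (Fin n)) (k : ℕ) :
    edgeIdealSqPow K G k
      = Ideal.span ((fun s => MvPolynomial.monomial s (1 : K)) '' SqAux.MS G k) := by
  rw [edgeIdealSqPow, SqAux.span_set_eq]

/-- Setup of the paper: `G` is a forest, `vn` (coordinate `n-1`) a distant leaf with
neighbor `vw` (coordinate `n-2`), `N_G(vw) = T ∪ {vu, vn}` where `vu` has coordinate
`n-3` and the vertices of `T` are leaves. Then, with `Gᵢ` the graphs obtained by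
deleting the last `i` of these vertices,
`I(G₁)^{[k]} ∩ x_{vn}x_{vw} I(G₂)^{[k-1]}
  = x_{vn}x_{vw}·( I(G₃)^{[k]} + x_{vu} I(G₃)^{[k-1]} + Σ_{i ∈ T} x_i I(G₂)^{[k-1]} )`. -/
theorem stmt_11 (K : Type*) [Field K] {n : ℕ} (hn : 3 ≤ n)
    (G : SimpleGraph (Fin n)) [DecidableRel G.Adj] (hforest : G.IsAcyclic)
    (hnu : 3 ≤ matchingNumber G)
    (vn vw vu : Fin n)
    (hvn : (vn : ℕ) = n - 1) (hvw : (vw : ℕ) = n - 2) (hvu : (vu : ℕ) = n - 3)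
    (hadj : G.Adj vw vn) (hleaf : G.degree vn = 1)
    (T : Finset (Fin n)) (hT : ∀ i ∈ T, G.degree i = 1)
    (hvnT : vn ∉ T) (hvuT : vu ∉ T)
    (hnbr : G.neighborFinset vw = insert vu (insert vn T))
    (hdegu : 1 ≤ G.degree vu)
    (k : ℕ) (h1 : 1 ≤ k) (h2 : k ≤ matchingNumber G) :
    edgeIdealSqPow K (delV G {vn}) k ⊓
        (Ideal.span {(X vn * X vw : MvPolynomial (Fin n) K)} *
          edgeIdealSqPow K (delV G {vn, vw}) (k - 1)) =
      Ideal.span {(X vn * X vw : MvPolynomial (Fin n) K)} *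
        (edgeIdealSqPow K (delV G {vn, vw, vu}) k ⊔
          Ideal.span {(X vu : MvPolynomial (Fin n) K)} *
            edgeIdealSqPow K (delV G {vn, vw, vu}) (k - 1) ⊔
          Ideal.span ((fun i : Fin n => (X i : MvPolynomial (Fin n) K)) '' T) *
            edgeIdealSqPow K (delV G {vn, vw}) (k - 1)) := by
  classical
  have hnm : vn ≠ vw := by intro h; rw [h] at hvn; omega
  have hnu' : vn ≠ vu := by intro h; rw [h] at hvn; omega
  have hwu : vw ≠ vu := by intro h; rw [h] at hvw; omega
  simp only [edgeIdealSqPow_eq']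
  rw [SqAux.singleton_XX K vn vw, SqAux.singleton_X K vu]
  simp only [SqAux.image_X]
  simp only [SqAux.span_mono_mul]
  rw [← Ideal.span_union, ← Set.image_union, ← Ideal.span_union, ← Set.image_union]
  rw [SqAux.span_mono_mul]
  ext p
  simp only [Submodule.mem_inf, mem_ideal_span_monomial_image]
  constructor
  · rintro ⟨hA, hB⟩ mm hm
    exact (SqAux.core G vn vw vu hnm hnu' hwu T hT hvnT hnbr k h1 mm).mp ⟨hA mm hm, hB mm hm⟩
  · intro h
    refine ⟨fun mm hm =>
        ((SqAux.core G vn vw vu hnm hnu' hwu T hT hvnT hnbr k h1 mm).mpr (h mm hm)).1,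
      fun mm hm =>
        ((SqAux.core G vn vw vu hnm hnu' hwu T hT hvnT hnbr k h1 mm).mpr (h mm hm)).2⟩

end
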